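/- arXiv:2509.10470 — 6 statements merged into one kernel-verified Lean document; each statement's English description precedes it below -/
import Mathlib

section
/- Let Q(λ,μ) = λ²A₂₀ + λμA₁₁ + μ²A₀₂ + λA₁₀ + μA₀₁ + A₀₀ be an n×n quadratic two-parameter matrix polynomial over ℂ, and let C(λ,μ) = λL₁ + μL₂ + L₀ be the 3n×3n companion pencil with L₁ = [[A₂₀,A₁₁,0],[0,0,0],[0,0,I]], L₂ = [[0,A₀₂,0],[0,0,I],[0,0,0]], L₀ = [[A₁₀,A₀₁,A₀₀],[0,-I,0],[-I,0,0]]. Then for any (λ,μ) ∈ ℂ×ℂ and nonzero x ∈ ℂⁿ, Q(λ,μ)x = 0 if and only if C(λ,μ)(Λ ⊗ x) = 0, where Λ = (λ, μ, 1)ᵀ. -/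
open Matrix

/-- Q(λ,μ) = λ²A₂₀ + λμA₁₁ + μ²A₀₂ + λA₁₀ + μA₀₁ + A₀₀ -/
noncomputable def quadQ {n : ℕ} (A20 A11 A02 A10 A01 A00 : Matrix (Fin n) (Fin n) ℂ)
    (l m : ℂ) : Matrix (Fin n) (Fin n) ℂ :=
  (l ^ 2) • A20 + (l * m) • A11 + (m ^ 2) • A02 + l • A10 + m • A01 + A00

/-- The companion pencil C(λ,μ) = λL₁ + μL₂ + L₀, realized as a 3×3 block matrix. -/
noncomputable def companionC {n : ℕ} (A20 A11 A02 A10 A01 A00 : Matrix (Fin n) (Fin n) ℂ)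
    (l m : ℂ) : Matrix (Fin 3 × Fin n) (Fin 3 × Fin n) ℂ :=
  fun p q =>
    (l • (![![A20, A11, 0], ![0, 0, 0], ![0, 0, (1 : Matrix (Fin n) (Fin n) ℂ)]] p.1 q.1)
      + m • (![![0, A02, 0], ![0, 0, (1 : Matrix (Fin n) (Fin n) ℂ)], ![0, 0, 0]] p.1 q.1)
      + (![![A10, A01, A00], ![0, -(1 : Matrix (Fin n) (Fin n) ℂ), 0],
          ![-(1 : Matrix (Fin n) (Fin n) ℂ), 0, 0]] p.1 q.1)) p.2 q.2

theorem companion_pencil_eigen_iff {n : ℕ}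
    (A20 A11 A02 A10 A01 A00 : Matrix (Fin n) (Fin n) ℂ)
    (l m : ℂ) (x : Fin n → ℂ) (hx : x ≠ 0) :
    (quadQ A20 A11 A02 A10 A01 A00 l m).mulVec x = 0 ↔
      (companionC A20 A11 A02 A10 A01 A00 l m).mulVec
        (fun p => ![l, m, 1] p.1 * x p.2) = 0 := by
  have key : ∀ j, (companionC A20 A11 A02 A10 A01 A00 l m).mulVec
      (fun p => ![l, m, 1] p.1 * x p.2) (0, j)
      = (quadQ A20 A11 A02 A10 A01 A00 l m).mulVec x j := by
    intro j
    simp only [companionC, quadQ, mulVec, dotProduct, Fintype.sum_prod_type,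
      Fin.sum_univ_three, Matrix.cons_val_zero, Matrix.cons_val_one, Matrix.head_cons,
      Matrix.cons_val_two, Matrix.tail_cons, Matrix.zero_apply, Matrix.add_apply,
      Matrix.smul_apply, Matrix.neg_apply, Matrix.one_apply, smul_eq_mul,
      mul_zero, add_zero, zero_add, zero_mul, mul_one, one_mul, smul_zero]
    rw [← Finset.sum_add_distrib, ← Finset.sum_add_distrib]
    apply Finset.sum_congr rfl
    intro r _
    ring
  have key1 : ∀ j, (companionC A20 A11 A02 A10 A01 A00 l m).mulVec
      (fun p => ![l, m, 1] p.1 * x p.2) (1, j) = 0 := by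
    intro j
    simp [companionC, mulVec, dotProduct, Fintype.sum_prod_type, Fin.sum_univ_three,
      Matrix.one_apply, mul_ite, Finset.sum_ite_eq', mul_comm]
  have key2 : ∀ j, (companionC A20 A11 A02 A10 A01 A00 l m).mulVec
      (fun p => ![l, m, 1] p.1 * x p.2) (2, j) = 0 := by
    intro j
    simp [companionC, mulVec, dotProduct, Fintype.sum_prod_type, Fin.sum_univ_three,
      Matrix.one_apply, mul_ite, Finset.sum_ite_eq', mul_comm]
  constructor
  · intro h
    funext p
    obtain ⟨i, j⟩ := p
    fin_cases i <;> simp [key, key1, key2, h]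
  · intro h
    funext j
    rw [← key j, h]
    rfl
end

section
/- Let Q(λ,μ) be a quadratic two-parameter matrix polynomial and Q_N(λ,μ) the corresponding polynomial in Newton basis with the same coefficients. Let S ∈ ℂ³ˣ³ be invertible with S·(λ,μ,1)ᵀ = (λ−α₁, μ−β₁, 1)ᵀ. Then the map f : 𝕃(Q) → 𝒩(Q_N) given by L(λ,μ) ↦ L(λ,μ)·(S⁻¹ ⊗ Iₙ) is a well-defined linear isomorphism of vector spaces, and it preserves ansatz vectors: if L(λ,μ)(Λ⊗Iₙ) = v ⊗ Q(λ,μ) then f(L)(λ,μ)(N⊗Iₙ) = v ⊗ Q(λ,μ). -/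
open Matrix

/-- Λ ⊗ Iₙ. -/
noncomputable def lamKronI {n : ℕ} (l m : ℂ) : Matrix (Fin 3 × Fin n) (Fin n) ℂ :=
  fun p j => ![l, m, 1] p.1 * (1 : Matrix (Fin n) (Fin n) ℂ) p.2 j

/-- N ⊗ Iₙ. -/
noncomputable def newtonKronI {n : ℕ} (α1 β1 : ℂ) (l m : ℂ) :
    Matrix (Fin 3 × Fin n) (Fin n) ℂ :=
  fun p j => ![l - α1, m - β1, 1] p.1 * (1 : Matrix (Fin n) (Fin n) ℂ) p.2 j

/-- v ⊗ Q. -/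
noncomputable def vecKron {n : ℕ} (v : Fin 3 → ℂ) (Q : Matrix (Fin n) (Fin n) ℂ) :
    Matrix (Fin 3 × Fin n) (Fin n) ℂ :=
  fun p j => v p.1 * Q p.2 j

/-- S ⊗ Iₙ. -/
noncomputable def matKronI {n : ℕ} (S : Matrix (Fin 3) (Fin 3) ℂ) :
    Matrix (Fin 3 × Fin n) (Fin 3 × Fin n) ℂ :=
  fun p q => S p.1 q.1 * (1 : Matrix (Fin n) (Fin n) ℂ) p.2 q.2

/-- w ⊗ Iₙ for a general vector w. -/
noncomputable def genKron {n : ℕ} (w : Fin 3 → ℂ) : Matrix (Fin 3 × Fin n) (Fin n) ℂ :=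
  fun p j => w p.1 * (1 : Matrix (Fin n) (Fin n) ℂ) p.2 j

lemma matKronI_mul_gen {n : ℕ} (A : Matrix (Fin 3) (Fin 3) ℂ) (w : Fin 3 → ℂ) :
    matKronI (n := n) A * genKron w = genKron (A.mulVec w) := by
  ext p j
  change ∑ k, matKronI (n := n) A p k * genKron w k j = _
  simp only [Matrix.mul_apply, matKronI, genKron, Matrix.mulVec, dotProduct,
    Fintype.sum_prod_type, Matrix.one_apply]
  simp [Finset.mul_sum, mul_ite, ite_mul, mul_comm]

lemma matKronI_mul {n : ℕ} (A B : Matrix (Fin 3) (Fin 3) ℂ) :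
    matKronI (n := n) A * matKronI B = matKronI (A * B) := by
  ext p q
  simp only [Matrix.mul_apply, matKronI, Fintype.sum_prod_type, Matrix.one_apply]
  simp [Finset.mul_sum, mul_ite, ite_mul]

lemma matKronI_one {n : ℕ} : matKronI (n := n) 1 = 1 := by
  ext p q
  simp [matKronI, Matrix.one_apply, Prod.ext_iff, and_comm]
  aesop

/-- The map L(λ,μ) ↦ L(λ,μ)(S⁻¹ ⊗ Iₙ) is a well-defined ansatz-vector-preserving
bijective linear map from 𝕃(Q) to 𝒩(Q_N). -/
theorem iso_L_to_N {n : ℕ} (α1 β1 : ℂ)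
    (A20 A11 A02 A10 A01 A00 : Matrix (Fin n) (Fin n) ℂ)
    (S : Matrix (Fin 3) (Fin 3) ℂ) (hS : IsUnit S)
    (hSN : ∀ l m : ℂ, S.mulVec ![l, m, 1] = ![l - α1, m - β1, 1]) :
    -- the map preserves ansatz vectors (well-definedness, and injectivity/surjectivity
    -- between the two ansatz spaces follows from the ↔ together with bijectivity below)
    (∀ (L : ℂ → ℂ → Matrix (Fin 3 × Fin n) (Fin 3 × Fin n) ℂ) (v : Fin 3 → ℂ),
      (∀ l m, L l m * lamKronI l m = vecKron v (quadQ A20 A11 A02 A10 A01 A00 l m)) ↔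
        (∀ l m, (L l m * matKronI S⁻¹) * newtonKronI α1 β1 l m =
          vecKron v (quadQ A20 A11 A02 A10 A01 A00 l m))) ∧
    -- the map is ℂ-linear
    (∀ (c : ℂ) (L L' : Matrix (Fin 3 × Fin n) (Fin 3 × Fin n) ℂ),
      (c • L + L') * matKronI (n := n) S⁻¹ =
        c • (L * matKronI S⁻¹) + L' * matKronI S⁻¹) ∧
    -- the map is bijective
    Function.Bijective
      (fun L : Matrix (Fin 3 × Fin n) (Fin 3 × Fin n) ℂ => L * matKronI S⁻¹) := by
  have hdet : IsUnit S.det := (Matrix.isUnit_iff_isUnit_det S).mp hS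
  have hinv : S⁻¹ * S = 1 := Matrix.nonsing_inv_mul S hdet
  have hinv' : S * S⁻¹ = 1 := Matrix.mul_nonsing_inv S hdet
  have key : ∀ l m : ℂ, matKronI (n := n) S⁻¹ * newtonKronI α1 β1 l m = lamKronI l m := by
    intro l m
    have h1 : newtonKronI (n := n) α1 β1 l m = genKron (S.mulVec ![l, m, 1]) := by
      rw [hSN]; rfl
    have h2 : lamKronI (n := n) l m = genKron ![l, m, 1] := rfl
    rw [h1, h2, matKronI_mul_gen, Matrix.mulVec_mulVec, hinv, Matrix.one_mulVec]
  refine ⟨fun L v => ⟨fun h l m => ?_, fun h l m => ?_⟩, fun c L L' => by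
    rw [add_mul, Matrix.smul_mul], ?_⟩
  · have e := Matrix.mul_assoc (L l m) (matKronI S⁻¹) (newtonKronI α1 β1 l m)
    have e2 := congrArg (fun X : Matrix (Fin 3 × Fin n) (Fin n) ℂ => L l m * X) (key l m)
    exact e.trans (e2.trans (h l m))
  · have := h l m
    have e := Matrix.mul_assoc (L l m) (matKronI S⁻¹) (newtonKronI α1 β1 l m)
    have e2 := congrArg (fun X : Matrix (Fin 3 × Fin n) (Fin n) ℂ => L l m * X) (key l m)
    exact e2.symm.trans (e.symm.trans this)
  · refine Function.bijective_iff_has_inverse.mpr ⟨fun L => L * matKronI S, ?_, ?_⟩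
    · intro L
      simp only [mul_assoc, matKronI_mul, hinv, matKronI_one, mul_one]
    · intro L
      simp only [mul_assoc, matKronI_mul, hinv', matKronI_one, mul_one]
end

section
/- Let A₁, A₂, A₃ ∈ ℂ³ⁿˣ³ⁿ, v ∈ ℂ³, and let Q(λ,μ) = λ²A₂₀+λμA₁₁+μ²A₀₂+λA₁₀+μA₀₁+A₀₀ and Q_N(λ,μ) = A₂₀n₂(λ)+A₁₁n₁(λ)m₁(μ)+A₀₂m₂(μ)+A₁₀n₁(λ)+A₀₁m₁(μ)+A₀₀ share the same coefficients. Then (λA₁ + μA₂ + A₃)(Λ ⊗ Iₙ) = v ⊗ Q(λ,μ) holds identically in (λ,μ) if and only if (A₁Γ₂(λ) + A₂Γ̃₂(μ) + A₃)(N ⊗ Iₙ) = v ⊗ Q_N(λ,μ) holds identically in (λ,μ). -/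
open Matrix

lemma scalar_mon (e1 e2 e3 e4 e5 e6 : ℂ) :
    (∀ l m : ℂ, l^2*e1 + l*m*e2 + m^2*e3 + l*e4 + m*e5 + e6 = 0) ↔
    (e1 = 0 ∧ e2 = 0 ∧ e3 = 0 ∧ e4 = 0 ∧ e5 = 0 ∧ e6 = 0) := by
  constructor
  · intro h
    have h00 := h 0 0; have h10 := h 1 0; have h20 := h (-1) 0
    have h01 := h 0 1; have h02 := h 0 (-1); have h11 := h 1 1
    refine ⟨?_, ?_, ?_, ?_, ?_, ?_⟩
    · linear_combination (h10 + h20)/2 - h00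
    · linear_combination h11 - h10 - h01 + h00
    · linear_combination (h01 + h02)/2 - h00
    · linear_combination (h10 - h20)/2
    · linear_combination (h01 - h02)/2
    · linear_combination h00
  · rintro ⟨h1, h2, h3, h4, h5, h6⟩ l m
    rw [h1, h2, h3, h4, h5, h6]; ring

lemma scalar_key (α1 α2 β1 β2 : ℂ) (e1 e2 e3 e4 e5 e6 : ℂ) :
    (∀ l m : ℂ, l^2*e1 + l*m*e2 + m^2*e3 + l*e4 + m*e5 + e6 = 0) ↔
    (∀ l m : ℂ, (l-α1)*(l-α2)*e1 + (l-α1)*(m-β1)*e2 + (m-β1)*(m-β2)*e3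
        + (l-α1)*e4 + (m-β1)*e5 + e6 = 0) := by
  have key2 : (∀ l m : ℂ, (l-α1)*(l-α2)*e1 + (l-α1)*(m-β1)*e2 + (m-β1)*(m-β2)*e3
        + (l-α1)*e4 + (m-β1)*e5 + e6 = 0)
      ↔ (∀ l m : ℂ, l^2*e1 + l*m*e2 + m^2*e3 + l*(e4+(α1-α2)*e1) + m*(e5+(β1-β2)*e3)
        + e6 = 0) := by
    constructor
    · intro h l m; linear_combination h (l+α1) (m+β1)
    · intro h l m; linear_combination h (l-α1) (m-β1)
  rw [scalar_mon, key2, scalar_mon]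
  constructor
  · rintro ⟨h1,h2,h3,h4,h5,h6⟩
    exact ⟨h1,h2,h3, by rw [h1,h4]; ring, by rw [h3,h5]; ring, h6⟩
  · rintro ⟨h1,h2,h3,h4,h5,h6⟩
    refine ⟨h1,h2,h3, ?_, ?_, h6⟩
    · linear_combination h4 - (α1-α2)*h1
    · linear_combination h5 - (β1-β2)*h3

noncomputable def quadQN {n : ℕ} (α1 α2 β1 β2 : ℂ)
    (A20 A11 A02 A10 A01 A00 : Matrix (Fin n) (Fin n) ℂ) (l m : ℂ) :
    Matrix (Fin n) (Fin n) ℂ :=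
  ((l - α1) * (l - α2)) • A20 + ((l - α1) * (m - β1)) • A11 +
    ((m - β1) * (m - β2)) • A02 + (l - α1) • A10 + (m - β1) • A01 + A00

noncomputable def Gamma2 {n : ℕ} (α1 α2 : ℂ) (l : ℂ) :
    Matrix (Fin 3 × Fin n) (Fin 3 × Fin n) ℂ :=
  fun p q => if p = q then ![l - α2, l - α1, l - α1] p.1 else 0

noncomputable def GammaT2 {n : ℕ} (β1 β2 : ℂ) (m : ℂ) :
    Matrix (Fin 3 × Fin n) (Fin 3 × Fin n) ℂ :=
  fun p q => if p = q then ![m - β1, m - β2, m - β1] p.1 else 0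


lemma entry_mon {n : ℕ} (A1 A2 A3 : Matrix (Fin 3 × Fin n) (Fin 3 × Fin n) ℂ)
    (v : Fin 3 → ℂ) (A20 A11 A02 A10 A01 A00 : Matrix (Fin n) (Fin n) ℂ)
    (l m : ℂ) (p : Fin 3 × Fin n) (j : Fin n) :
    (((l • A1 + m • A2 + A3) * lamKronI l m : Matrix (Fin 3 × Fin n) (Fin n) ℂ)) p j
      - vecKron v (quadQ A20 A11 A02 A10 A01 A00 l m) p j
    = l^2 * (A1 p (0, j) - v p.1 * A20 p.2 j)
      + l*m * (A1 p (1, j) + A2 p (0, j) - v p.1 * A11 p.2 j)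
      + m^2 * (A2 p (1, j) - v p.1 * A02 p.2 j)
      + l * (A1 p (2, j) + A3 p (0, j) - v p.1 * A10 p.2 j)
      + m * (A2 p (2, j) + A3 p (1, j) - v p.1 * A01 p.2 j)
      + (A3 p (2, j) - v p.1 * A00 p.2 j) := by
  show (∑ k, (l • A1 + m • A2 + A3) p k * lamKronI l m k j) - _ = _
  simp only [lamKronI, vecKron, quadQ, Matrix.mul_apply, Matrix.add_apply,
    Matrix.smul_apply, Matrix.one_apply, Fintype.sum_prod_type, Fin.sum_univ_three,
    mul_ite, mul_one, mul_zero, ite_mul, zero_mul, Finset.sum_ite_eq',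
    Finset.mem_univ, if_true, smul_eq_mul, Matrix.cons_val_zero, Matrix.cons_val_one,
    Matrix.head_cons, Matrix.cons_val_two, Matrix.tail_cons]
  ring

lemma entry_newton {n : ℕ} (α1 α2 β1 β2 : ℂ)
    (A1 A2 A3 : Matrix (Fin 3 × Fin n) (Fin 3 × Fin n) ℂ)
    (v : Fin 3 → ℂ) (A20 A11 A02 A10 A01 A00 : Matrix (Fin n) (Fin n) ℂ)
    (l m : ℂ) (p : Fin 3 × Fin n) (j : Fin n) :
    (((A1 * Gamma2 α1 α2 l + A2 * GammaT2 β1 β2 m + A3) * newtonKronI α1 β1 l m :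
        Matrix (Fin 3 × Fin n) (Fin n) ℂ)) p j
      - vecKron v (quadQN α1 α2 β1 β2 A20 A11 A02 A10 A01 A00 l m) p j
    = (l-α1)*(l-α2) * (A1 p (0, j) - v p.1 * A20 p.2 j)
      + (l-α1)*(m-β1) * (A1 p (1, j) + A2 p (0, j) - v p.1 * A11 p.2 j)
      + (m-β1)*(m-β2) * (A2 p (1, j) - v p.1 * A02 p.2 j)
      + (l-α1) * (A1 p (2, j) + A3 p (0, j) - v p.1 * A10 p.2 j)
      + (m-β1) * (A2 p (2, j) + A3 p (1, j) - v p.1 * A01 p.2 j)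
      + (A3 p (2, j) - v p.1 * A00 p.2 j) := by
  show (∑ k, (A1 * Gamma2 α1 α2 l + A2 * GammaT2 β1 β2 m + A3 :
    Matrix (Fin 3 × Fin n) (Fin 3 × Fin n) ℂ) p k *
    newtonKronI α1 β1 l m k j) - _ = _
  simp only [newtonKronI, vecKron, quadQN, Gamma2, GammaT2, Matrix.mul_apply,
    Matrix.add_apply, Matrix.smul_apply, Matrix.one_apply, Fintype.sum_prod_type,
    Fin.sum_univ_three, mul_ite, mul_one, mul_zero, ite_mul, zero_mul,
    Finset.sum_ite_eq', Finset.sum_ite_eq, Finset.mem_univ, if_true, smul_eq_mul,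
    Matrix.cons_val_zero, Matrix.cons_val_one, Matrix.head_cons, Matrix.cons_val_two,
    Matrix.tail_cons]
  ring

theorem monomial_ansatz_iff_newton_ansatz {n : ℕ} (α1 α2 β1 β2 : ℂ)
    (A1 A2 A3 : Matrix (Fin 3 × Fin n) (Fin 3 × Fin n) ℂ) (v : Fin 3 → ℂ)
    (A20 A11 A02 A10 A01 A00 : Matrix (Fin n) (Fin n) ℂ) :
    (∀ l m : ℂ, (l • A1 + m • A2 + A3) * lamKronI l m =
        vecKron v (quadQ A20 A11 A02 A10 A01 A00 l m)) ↔
      (∀ l m : ℂ, (A1 * Gamma2 α1 α2 l + A2 * GammaT2 β1 β2 m + A3) *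
          newtonKronI α1 β1 l m =
        vecKron v (quadQN α1 α2 β1 β2 A20 A11 A02 A10 A01 A00 l m)) := by
  constructor
  · intro h l m
    ext p j
    rw [← sub_eq_zero, entry_newton α1 α2 β1 β2 A1 A2 A3 v A20 A11 A02 A10 A01 A00]
    refine (scalar_key α1 α2 β1 β2 _ _ _ _ _ _).mp (fun l' m' => ?_) l m
    rw [← entry_mon A1 A2 A3 v A20 A11 A02 A10 A01 A00 l' m' p j, sub_eq_zero]
    exact congrFun (congrFun (h l' m') p) j
  · intro h l m
    ext p j
    rw [← sub_eq_zero, entry_mon A1 A2 A3 v A20 A11 A02 A10 A01 A00]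
    refine (scalar_key α1 α2 β1 β2 _ _ _ _ _ _).mpr (fun l' m' => ?_) l m
    rw [← entry_newton α1 α2 β1 β2 A1 A2 A3 v A20 A11 A02 A10 A01 A00 l' m' p j,
      sub_eq_zero]
    exact congrFun (congrFun (h l' m') p) j
end

section
/- Let Q_N(λ,μ) = A₂₀n₂(λ)+A₁₁n₁(λ)m₁(μ)+A₀₂m₂(μ)+A₁₀n₁(λ)+A₀₁m₁(μ)+A₀₀ be an n×n quadratic two-parameter matrix polynomial in Newton basis. Let L_N(λ,μ) ∈ 𝒩(Q_N) be the pencil with ansatz vector e₁ constructed with blocks Y₂₁ = Y₃₁ = 0 and Z-blocks satisfying det [[Z₂₁, Z₂₂],[Z₃₁, Z₃₂]] ≠ 0 (as in the paper's Theorem on linearizations). Then there exist matrix polynomials Ẽ(λ,μ) and F̃(λ,μ) with constant nonzero determinants (unimodular) such that F̃(λ,μ)·L_N(λ,μ)·Ẽ(λ,μ) = diag(Q_N(λ,μ), I₂ₙ); consequently det L_N(λ,μ) = γ·det Q_N(λ,μ) for some nonzero constant γ ∈ ℂ, i.e., L_N is a linearization of Q_N. -/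
open Matrix

/-- Assemble a 3×3 block matrix of n×n blocks into a 3n×3n matrix. -/
noncomputable def blk {n : ℕ} (B : Fin 3 → Fin 3 → Matrix (Fin n) (Fin n) ℂ) :
    Matrix (Fin 3 × Fin n) (Fin 3 × Fin n) ℂ :=
  fun p q => B p.1 q.1 p.2 q.2

/-- diag(Q, I₂ₙ) as a 3n×3n matrix. -/
noncomputable def diagQI {n : ℕ} (Q : Matrix (Fin n) (Fin n) ℂ) :
    Matrix (Fin 3 × Fin n) (Fin 3 × Fin n) ℂ :=
  fun p q => if p.1 = 0 then (if q.1 = 0 then Q p.2 q.2 else 0)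
    else (if p = q then 1 else 0)

/-- The pencil L_N(λ,μ) = A₁Γ₂(λ) + A₂Γ̃₂(μ) + A₃ with ansatz vector e₁,
with Y₂₁ = Y₃₁ = 0 (blocks as in the paper's Theorem). -/
noncomputable def LN {n : ℕ} (α1 α2 β1 β2 : ℂ)
    (A20 A11 A02 A10 A01 A00 Y11 Z11 Z21 Z31 Z12 Z22 Z32 : Matrix (Fin n) (Fin n) ℂ)
    (l m : ℂ) : Matrix (Fin 3 × Fin n) (Fin 3 × Fin n) ℂ :=
  blk ![![A20, A11 - Y11, A10 - Z11], ![0, 0, -Z21], ![0, 0, -Z31]] * Gamma2 α1 α2 l +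
  blk ![![Y11, A02, A01 - Z12], ![0, 0, -Z22], ![0, 0, -Z32]] * GammaT2 β1 β2 m +
  blk ![![Z11, Z12, A00], ![Z21, Z22, 0], ![Z31, Z32, 0]]

section Aux

variable {n : ℕ}

lemma blk_add (B C : Fin 3 → Fin 3 → Matrix (Fin n) (Fin n) ℂ) :
    blk B + blk C = blk (fun i j => B i j + C i j) := rfl

lemma blk_mul (B C : Fin 3 → Fin 3 → Matrix (Fin n) (Fin n) ℂ) :
    blk B * blk C = blk (fun i k => B i 0 * C 0 k + B i 1 * C 1 k + B i 2 * C 2 k) := by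
  ext ⟨i, a⟩ ⟨k, b⟩
  simp [blk, Matrix.mul_apply, Fintype.sum_prod_type, Fin.sum_univ_three,
    Finset.sum_add_distrib]

def eSum (n : ℕ) : (Fin 3 × Fin n) ≃ (Fin n ⊕ (Fin n ⊕ Fin n)) where
  toFun p := match p with
    | (0, a) => Sum.inl a
    | (1, a) => Sum.inr (Sum.inl a)
    | (2, a) => Sum.inr (Sum.inr a)
  invFun s := Sum.elim (fun a => (0, a)) (Sum.elim (fun a => (1, a)) (fun a => (2, a))) s
  left_inv := by rintro ⟨i, a⟩; fin_cases i <;> rfl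
  right_inv := by rintro (a | a | a) <;> rfl

lemma reindex_blk (B : Fin 3 → Fin 3 → Matrix (Fin n) (Fin n) ℂ) :
    (blk B).submatrix (eSum n).symm (eSum n).symm =
      fromBlocks (B 0 0) (fromCols (B 0 1) (B 0 2)) (fromRows (B 1 0) (B 2 0))
        (fromBlocks (B 1 1) (B 1 2) (B 2 1) (B 2 2)) := by
  ext i j
  rcases i with a | a | a <;> rcases j with b | b | b <;> rfl

lemma det_blk (B : Fin 3 → Fin 3 → Matrix (Fin n) (Fin n) ℂ) :
    (blk B).det =
      (fromBlocks (B 0 0) (fromCols (B 0 1) (B 0 2)) (fromRows (B 1 0) (B 2 0))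
        (fromBlocks (B 1 1) (B 1 2) (B 2 1) (B 2 2))).det := by
  rw [← reindex_blk, Matrix.det_submatrix_equiv_self]

lemma fromRows_zero_zero :
    (fromRows (0 : Matrix (Fin n) (Fin n) ℂ) (0 : Matrix (Fin n) (Fin n) ℂ)) = 0 := by
  exact fromRows_zero

lemma det_blk_lowtri (B : Fin 3 → Fin 3 → Matrix (Fin n) (Fin n) ℂ)
    (h10 : B 1 0 = 0) (h20 : B 2 0 = 0) :
    (blk B).det = (B 0 0).det * (fromBlocks (B 1 1) (B 1 2) (B 2 1) (B 2 2)).det := by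
  rw [det_blk, h10, h20, fromRows_zero_zero, Matrix.det_fromBlocks_zero₂₁]

lemma Gamma2_eq (α1 α2 l : ℂ) : (Gamma2 α1 α2 l : Matrix (Fin 3 × Fin n) _ ℂ) =
    blk ![![(l - α2) • 1, 0, 0], ![0, (l - α1) • 1, 0], ![0, 0, (l - α1) • 1]] := by
  ext ⟨i, a⟩ ⟨j, b⟩
  fin_cases i <;> fin_cases j <;>
    simp [Gamma2, blk, Prod.ext_iff, Matrix.one_apply, mul_comm, Matrix.vecHead,
      Matrix.vecTail, Function.comp]

lemma GammaT2_eq (β1 β2 m : ℂ) : (GammaT2 β1 β2 m : Matrix (Fin 3 × Fin n) _ ℂ) =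
    blk ![![(m - β1) • 1, 0, 0], ![0, (m - β2) • 1, 0], ![0, 0, (m - β1) • 1]] := by
  ext ⟨i, a⟩ ⟨j, b⟩
  fin_cases i <;> fin_cases j <;>
    simp [GammaT2, blk, Prod.ext_iff, Matrix.one_apply, mul_comm, Matrix.vecHead,
      Matrix.vecTail, Function.comp]

lemma diagQI_eq (Q : Matrix (Fin n) (Fin n) ℂ) :
    diagQI Q = blk ![![Q, 0, 0], ![0, 1, 0], ![0, 0, 1]] := by
  ext ⟨i, a⟩ ⟨j, b⟩
  fin_cases i <;> fin_cases j <;>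
    simp [diagQI, blk, Prod.ext_iff, Matrix.one_apply, Matrix.vecHead, Matrix.vecTail,
      Function.comp]

lemma blk_one : (blk ![![1,0,0],![0,1,0],![0,0,1]] : Matrix (Fin 3 × Fin n) _ ℂ) = 1 := by
  ext ⟨i, a⟩ ⟨j, b⟩
  fin_cases i <;> fin_cases j <;>
    simp [blk, Prod.ext_iff, Matrix.one_apply, Matrix.vecHead, Matrix.vecTail, Function.comp]

lemma LN_eq (α1 α2 β1 β2 : ℂ)
    (A20 A11 A02 A10 A01 A00 Y11 Z11 Z21 Z31 Z12 Z22 Z32 : Matrix (Fin n) (Fin n) ℂ)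
    (l m : ℂ) :
    LN α1 α2 β1 β2 A20 A11 A02 A10 A01 A00 Y11 Z11 Z21 Z31 Z12 Z22 Z32 l m =
    blk ![![(l - α2) • A20 + (m - β1) • Y11 + Z11,
            (l - α1) • (A11 - Y11) + (m - β2) • A02 + Z12,
            (l - α1) • (A10 - Z11) + (m - β1) • (A01 - Z12) + A00],
          ![Z21, Z22, -((l - α1) • Z21 + (m - β1) • Z22)],
          ![Z31, Z32, -((l - α1) • Z31 + (m - β1) • Z32)]] := by
  unfold LN
  rw [Gamma2_eq, GammaT2_eq, blk_mul, blk_mul, blk_add, blk_add]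
  refine congrArg blk ?_
  funext i j
  fin_cases i <;> fin_cases j <;>
    simp [Matrix.mul_smul, Matrix.vecHead, Matrix.vecTail, Function.comp] <;>
    module

lemma LNE_eq (α1 α2 β1 β2 : ℂ)
    (A20 A11 A02 A10 A01 A00 Y11 Z11 Z21 Z31 Z12 Z22 Z32 : Matrix (Fin n) (Fin n) ℂ)
    (l m : ℂ) :
    LN α1 α2 β1 β2 A20 A11 A02 A10 A01 A00 Y11 Z11 Z21 Z31 Z12 Z22 Z32 l m *
      blk ![![(l - α1) • 1, 1, 0], ![(m - β1) • 1, 0, 1], ![1, 0, 0]] =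
    blk ![![quadQN α1 α2 β1 β2 A20 A11 A02 A10 A01 A00 l m,
            (l - α2) • A20 + (m - β1) • Y11 + Z11,
            (l - α1) • (A11 - Y11) + (m - β2) • A02 + Z12],
          ![0, Z21, Z22],
          ![0, Z31, Z32]] := by
  rw [LN_eq, blk_mul]
  refine congrArg blk ?_
  funext i j
  fin_cases i <;> fin_cases j <;>
    simp [quadQN, Matrix.mul_smul, Matrix.vecHead, Matrix.vecTail, Function.comp] <;>
    module

lemma FLNE (Q B1 B2 Z21 Z22 Z31 Z32 W11 W12 W21 W22 : Matrix (Fin n) (Fin n) ℂ)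
    (h1 : W11 * Z21 + W12 * Z31 = 1) (h2 : W11 * Z22 + W12 * Z32 = 0)
    (h3 : W21 * Z21 + W22 * Z31 = 0) (h4 : W21 * Z22 + W22 * Z32 = 1) :
    blk ![![1, -(B1 * W11 + B2 * W21), -(B1 * W12 + B2 * W22)], ![0, W11, W12], ![0, W21, W22]] *
      blk ![![Q, B1, B2], ![0, Z21, Z22], ![0, Z31, Z32]] =
    blk ![![Q, 0, 0], ![0, 1, 0], ![0, 0, 1]] := by
  rw [blk_mul]
  refine congrArg blk ?_
  funext i j
  fin_cases i <;> fin_cases j <;>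
    simp [Matrix.vecHead, Matrix.vecTail, Function.comp]
  · calc B1 + (-(B2 * W21) + -(B1 * W11)) * Z21 + (-(B2 * W22) + -(B1 * W12)) * Z31
        = B1 - B1 * (W11 * Z21 + W12 * Z31) - B2 * (W21 * Z21 + W22 * Z31) := by noncomm_ring
      _ = 0 := by rw [h1, h3]; simp
  · calc B2 + (-(B2 * W21) + -(B1 * W11)) * Z22 + (-(B2 * W22) + -(B1 * W12)) * Z32
        = B2 - B1 * (W11 * Z22 + W12 * Z32) - B2 * (W21 * Z22 + W22 * Z32) := by noncomm_ring
      _ = 0 := by rw [h2, h4]; simp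
  · exact h1
  · exact h2
  · exact h3
  · exact h4

/-- E factors as a unitriangular matrix times a constant permutation matrix. -/
lemma E_factor (α1 β1 l m : ℂ) :
    (blk ![![(l - α1) • 1, 1, 0], ![(m - β1) • 1, 0, 1], ![1, 0, 0]]
      : Matrix (Fin 3 × Fin n) _ ℂ) =
    blk ![![1, 0, (l - α1) • 1], ![0, 1, (m - β1) • 1], ![0, 0, 1]] *
      blk ![![0, 1, 0], ![0, 0, 1], ![1, 0, 0]] := by
  rw [blk_mul]
  refine congrArg blk ?_
  funext i j
  fin_cases i <;> fin_cases j <;>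
    simp [Matrix.vecHead, Matrix.vecTail, Function.comp]

end Aux

theorem LN_is_linearization {n : ℕ} (α1 α2 β1 β2 : ℂ)
    (A20 A11 A02 A10 A01 A00 Y11 Z11 Z21 Z31 Z12 Z22 Z32 : Matrix (Fin n) (Fin n) ℂ)
    (hZ : (Matrix.fromBlocks Z21 Z22 Z31 Z32).det ≠ 0) :
    ∃ E F : ℂ → ℂ → Matrix (Fin 3 × Fin n) (Fin 3 × Fin n) ℂ,
      (∃ c : ℂ, c ≠ 0 ∧ ∀ l m : ℂ, (E l m).det = c) ∧
      (∃ c : ℂ, c ≠ 0 ∧ ∀ l m : ℂ, (F l m).det = c) ∧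
      (∀ l m : ℂ,
        F l m * LN α1 α2 β1 β2 A20 A11 A02 A10 A01 A00 Y11 Z11 Z21 Z31 Z12 Z22 Z32 l m *
            E l m =
          diagQI (quadQN α1 α2 β1 β2 A20 A11 A02 A10 A01 A00 l m)) ∧
      (∃ γ : ℂ, γ ≠ 0 ∧ ∀ l m : ℂ,
        (LN α1 α2 β1 β2 A20 A11 A02 A10 A01 A00 Y11 Z11 Z21 Z31 Z12 Z22 Z32 l m).det =
          γ * (quadQN α1 α2 β1 β2 A20 A11 A02 A10 A01 A00 l m).det) := by
  classical
  -- the inverse of the Z-block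
  set Z : Matrix (Fin n ⊕ Fin n) (Fin n ⊕ Fin n) ℂ := Matrix.fromBlocks Z21 Z22 Z31 Z32 with hZdef
  have hZu : IsUnit Z.det := isUnit_iff_ne_zero.mpr hZ
  set W : Matrix (Fin n ⊕ Fin n) (Fin n ⊕ Fin n) ℂ := Z⁻¹ with hWdef
  have hWZ : W * Z = 1 := Matrix.nonsing_inv_mul Z hZu
  set W11 := W.toBlocks₁₁ with hW11
  set W12 := W.toBlocks₁₂ with hW12
  set W21 := W.toBlocks₂₁ with hW21
  set W22 := W.toBlocks₂₂ with hW22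
  have hWblocks : Matrix.fromBlocks W11 W12 W21 W22 = W := Matrix.fromBlocks_toBlocks W
  have hWZ' : Matrix.fromBlocks (W11 * Z21 + W12 * Z31) (W11 * Z22 + W12 * Z32)
      (W21 * Z21 + W22 * Z31) (W21 * Z22 + W22 * Z32)
      = Matrix.fromBlocks 1 0 0 1 := by
    rw [← Matrix.fromBlocks_multiply, hWblocks, ← hZdef, Matrix.fromBlocks_one]
    exact hWZ
  have h1 : W11 * Z21 + W12 * Z31 = 1 := by
    have := congrArg Matrix.toBlocks₁₁ hWZ'
    rwa [Matrix.toBlocks_fromBlocks₁₁, Matrix.toBlocks_fromBlocks₁₁] at this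
  have h2 : W11 * Z22 + W12 * Z32 = 0 := by
    have := congrArg Matrix.toBlocks₁₂ hWZ'
    rwa [Matrix.toBlocks_fromBlocks₁₂, Matrix.toBlocks_fromBlocks₁₂] at this
  have h3 : W21 * Z21 + W22 * Z31 = 0 := by
    have := congrArg Matrix.toBlocks₂₁ hWZ'
    rwa [Matrix.toBlocks_fromBlocks₂₁, Matrix.toBlocks_fromBlocks₂₁] at this
  have h4 : W21 * Z22 + W22 * Z32 = 1 := by
    have := congrArg Matrix.toBlocks₂₂ hWZ'
    rwa [Matrix.toBlocks_fromBlocks₂₂, Matrix.toBlocks_fromBlocks₂₂] at this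
  -- the unimodular transformations
  set P : Matrix (Fin 3 × Fin n) (Fin 3 × Fin n) ℂ :=
    blk ![![0, 1, 0], ![0, 0, 1], ![1, 0, 0]] with hPdef
  set E : ℂ → ℂ → Matrix (Fin 3 × Fin n) (Fin 3 × Fin n) ℂ := fun l m =>
    blk ![![(l - α1) • 1, 1, 0], ![(m - β1) • 1, 0, 1], ![1, 0, 0]] with hEdef
  set F : ℂ → ℂ → Matrix (Fin 3 × Fin n) (Fin 3 × Fin n) ℂ := fun l m =>
    blk ![![1, -(((l - α2) • A20 + (m - β1) • Y11 + Z11) * W11 +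
              ((l - α1) • (A11 - Y11) + (m - β2) • A02 + Z12) * W21),
            -(((l - α2) • A20 + (m - β1) • Y11 + Z11) * W12 +
              ((l - α1) • (A11 - Y11) + (m - β2) • A02 + Z12) * W22)],
          ![0, W11, W12], ![0, W21, W22]] with hFdef
  -- the key identity
  have key : ∀ l m : ℂ,
      F l m * LN α1 α2 β1 β2 A20 A11 A02 A10 A01 A00 Y11 Z11 Z21 Z31 Z12 Z22 Z32 l m *
        E l m = diagQI (quadQN α1 α2 β1 β2 A20 A11 A02 A10 A01 A00 l m) := by
    intro l m
    rw [mul_assoc, hEdef, LNE_eq, hFdef, diagQI_eq]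
    exact FLNE _ _ _ _ _ _ _ _ _ _ _ h1 h2 h3 h4
  -- determinant of E
  have hPP : P * blk ![![0, 0, 1], ![1, 0, 0], ![0, 1, 0]] = 1 := by
    rw [hPdef, blk_mul, ← blk_one]
    refine congrArg blk ?_
    funext i j
    fin_cases i <;> fin_cases j <;>
      simp [Matrix.vecHead, Matrix.vecTail, Function.comp]
  have hPne : P.det ≠ 0 := by
    intro h
    have := congrArg Matrix.det hPP
    rw [Matrix.det_mul, h, zero_mul, Matrix.det_one] at this
    exact zero_ne_one this
  have hdetE : ∀ l m : ℂ, (E l m).det = P.det := by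
    intro l m
    rw [hEdef]
    show (blk ![![(l - α1) • 1, 1, 0], ![(m - β1) • 1, 0, 1], ![1, 0, 0]]).det = P.det
    rw [E_factor, Matrix.det_mul, ← hPdef]
    have hT : (blk ![![1, 0, (l - α1) • 1], ![0, 1, (m - β1) • 1], ![0, 0, 1]]
        : Matrix (Fin 3 × Fin n) _ ℂ).det = 1 := by
      rw [det_blk_lowtri _ (by simp [Matrix.vecHead, Matrix.vecTail, Function.comp])
        (by simp [Matrix.vecHead, Matrix.vecTail, Function.comp])]
      simp [Matrix.det_fromBlocks_zero₂₁, Matrix.vecHead, Matrix.vecTail, Function.comp]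
    rw [hT, one_mul]
  -- determinant of F
  have hdetW : W.det ≠ 0 := by
    rw [hWdef, Matrix.det_nonsing_inv]
    simpa [Ring.inverse_eq_inv'] using inv_ne_zero hZ
  have hdetF : ∀ l m : ℂ, (F l m).det = W.det := by
    intro l m
    rw [hFdef]
    show (blk _).det = W.det
    rw [det_blk_lowtri _ (by simp [Matrix.vecHead, Matrix.vecTail, Function.comp])
      (by simp [Matrix.vecHead, Matrix.vecTail, Function.comp])]
    simp [Matrix.vecHead, Matrix.vecTail, Function.comp, hWblocks]
  refine ⟨E, F, ⟨P.det, hPne, hdetE⟩, ⟨W.det, hdetW, hdetF⟩, key, ?_⟩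
  -- determinant relation
  refine ⟨(W.det * P.det)⁻¹, inv_ne_zero (mul_ne_zero hdetW hPne), ?_⟩
  intro l m
  have h := congrArg Matrix.det (key l m)
  rw [Matrix.det_mul, Matrix.det_mul, hdetE, hdetF] at h
  have hD : (diagQI (quadQN α1 α2 β1 β2 A20 A11 A02 A10 A01 A00 l m)).det =
      (quadQN α1 α2 β1 β2 A20 A11 A02 A10 A01 A00 l m).det := by
    rw [diagQI_eq, det_blk_lowtri _ (by simp [Matrix.vecHead, Matrix.vecTail, Function.comp])
      (by simp [Matrix.vecHead, Matrix.vecTail, Function.comp])]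
    simp [Matrix.det_fromBlocks_zero₂₁, Matrix.vecHead, Matrix.vecTail, Function.comp]
  rw [hD] at h
  field_simp
  linear_combination h
end

section
/- Let f, g ∈ ℂ[x,y] be nonzero polynomials. If the set of common zeros {(x,y) ∈ ℂ×ℂ : f(x,y) = 0 ∧ g(x,y) = 0} is finite, then its cardinality is at most deg(f)·deg(g). -/
namespace BezoutAux

section Syl
open Polynomial Matrix Finset



variable {R : Type*} [CommRing R]

/-- Rows of the Sylvester matrix: shifted copies of `f` and `g`. -/
noncomputable def sylRow (m n : ℕ) (f g : R[X]) (r : Fin (m + n)) : R[X] :=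
  if (r : ℕ) < n then X ^ (r : ℕ) * f else X ^ ((r : ℕ) - n) * g

/-- The Sylvester matrix of `f` and `g` relative to degrees `m`, `n`. -/
noncomputable def syl (m n : ℕ) (f g : R[X]) : Matrix (Fin (m + n)) (Fin (m + n)) R :=
  fun r k => (sylRow m n f g r).coeff (k : ℕ)

theorem syl_map {S : Type*} [CommRing S] (φ : R →+* S) (m n : ℕ) (f g : R[X]) :
    (syl m n f g).map φ = syl m n (f.map φ) (g.map φ) := by
  ext r k
  simp only [Matrix.map_apply, syl, sylRow]
  split_ifs <;> rw [← Polynomial.coeff_map] <;> simp [Polynomial.map_mul]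

theorem det_syl_map {S : Type*} [CommRing S] (φ : R →+* S) (m n : ℕ) (f g : R[X]) :
    φ ((syl m n f g).det) = (syl m n (f.map φ) (g.map φ)).det := by
  rw [RingHom.map_det, RingHom.mapMatrix_apply, syl_map]

theorem natDegree_sylRow_lt (m n : ℕ) (f g : R[X]) (hf : f.natDegree ≤ m)
    (hg : g.natDegree ≤ n) (r : Fin (m + n)) :
    (sylRow m n f g r).natDegree < m + n := by
  have hr := r.2
  rw [sylRow]
  split_ifs with h
  · calc (X ^ (r : ℕ) * f).natDegree ≤ (X ^ (r : ℕ) : R[X]).natDegree + f.natDegree :=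
        natDegree_mul_le
    _ ≤ (r : ℕ) + m := by gcongr; exact natDegree_X_pow_le _
    _ < m + n := by omega
  · calc (X ^ ((r : ℕ) - n) * g).natDegree ≤
        (X ^ ((r : ℕ) - n) : R[X]).natDegree + g.natDegree := natDegree_mul_le
    _ ≤ ((r : ℕ) - n) + n := by gcongr; exact natDegree_X_pow_le _
    _ < m + n := by omega


/-- If `f` and `g` have a common root, the Sylvester determinant vanishes. -/
theorem det_syl_eq_zero_of_common_root {K : Type*} [Field K] (m n : ℕ) (f g : K[X])
    (hf : f.natDegree ≤ m) (hg : g.natDegree ≤ n) (hmn : 0 < m + n) (b : K)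
    (hfb : f.eval b = 0) (hgb : g.eval b = 0) : (syl m n f g).det = 0 := by
  rw [← Matrix.exists_mulVec_eq_zero_iff]
  refine ⟨fun k => b ^ (k : ℕ), ?_, ?_⟩
  · intro h
    have := congrFun h ⟨0, hmn⟩
    simp at this
  · funext r
    have hd := natDegree_sylRow_lt m n f g hf hg r
    have : (syl m n f g).mulVec (fun k => b ^ (k : ℕ)) r = (sylRow m n f g r).eval b := by
      rw [Polynomial.eval_eq_sum_range' hd, ← Fin.sum_univ_eq_sum_range]
      rfl
    rw [Pi.zero_apply, this, sylRow]
    split_ifs <;> simp [hfb, hgb]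



variable {R : Type*} [CommRing R]

/-- If `deg f = m ≥ 1`, `deg g = n ≥ 1` and the Sylvester determinant vanishes,
then `f` and `g` have a common root in `ℂ`. -/
theorem exists_common_root_of_det_syl_eq_zero (m n : ℕ) (f g : ℂ[X])
    (hf : f.natDegree = m) (hg : g.natDegree = n) (hm : 1 ≤ m) (hn : 1 ≤ n)
    (hdet : (syl m n f g).det = 0) : ∃ b : ℂ, f.eval b = 0 ∧ g.eval b = 0 := by
  have hf0 : f ≠ 0 := fun h => by simp [h] at hf; omega
  have hg0 : g ≠ 0 := fun h => by simp [h] at hg; omega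
  obtain ⟨w, hw0, hw⟩ := Matrix.exists_vecMul_eq_zero_iff.mpr hdet
  set u : ℂ[X] := ∑ r : Fin (m + n), if (r : ℕ) < n then C (w r) * X ^ (r : ℕ) else 0 with hu
  set v : ℂ[X] := ∑ r : Fin (m + n), if (r : ℕ) < n then 0 else C (w r) * X ^ ((r : ℕ) - n)
    with hv
  have hsum : u * f + v * g = ∑ r : Fin (m + n), C (w r) * sylRow m n f g r := by
    rw [hu, hv, Finset.sum_mul, Finset.sum_mul, ← Finset.sum_add_distrib]
    refine Finset.sum_congr rfl fun r _ => ?_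
    rw [sylRow]
    split_ifs with h <;> ring
  have hdegu : u.natDegree < n := by
    have : u.natDegree ≤ n - 1 := by
      refine natDegree_sum_le_of_forall_le _ _ fun r _ => ?_
      split_ifs with h
      · exact (natDegree_C_mul_X_pow_le _ _).trans (by omega)
      · simp
    omega
  have hdegv : v.natDegree < m := by
    have : v.natDegree ≤ m - 1 := by
      refine natDegree_sum_le_of_forall_le _ _ fun r _ => ?_
      split_ifs with h
      · simp
      · have hr := r.2
        exact (natDegree_C_mul_X_pow_le _ _).trans (by omega)
    omega
  -- the combination is zero
  have hzero : u * f + v * g = 0 := by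
    rw [hsum]
    ext k
    rw [Polynomial.coeff_zero]
    by_cases hk : k < m + n
    · have := congrFun hw ⟨k, hk⟩
      simp only [Matrix.vecMul, Pi.zero_apply, dotProduct] at this
      rw [Polynomial.finset_sum_coeff]
      simpa [syl, mul_comm] using this
    · refine Polynomial.coeff_eq_zero_of_natDegree_lt ?_
      refine lt_of_le_of_lt (natDegree_sum_le_of_forall_le _ _ fun r _ => ?_) (by omega : m + n - 1 < k)
      refine natDegree_mul_le.trans ?_
      have := natDegree_sylRow_lt m n f g hf.le hg.le r
      simp only [natDegree_C, zero_add]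
      omega
  -- coefficients of u and v pick out w
  have hcu : ∀ r : Fin (m + n), (r : ℕ) < n → u.coeff (r : ℕ) = w r := by
    intro r hr
    rw [hu, Polynomial.finset_sum_coeff]
    rw [Finset.sum_eq_single r]
    · simp [hr]
    · intro s _ hs
      split_ifs with h
      · rw [Polynomial.coeff_C_mul, Polynomial.coeff_X_pow]
        have : (s : ℕ) ≠ (r : ℕ) := fun hc => hs (Fin.ext hc)
        simp only [mul_ite, mul_one, mul_zero, ite_eq_right_iff]
        exact fun hc => absurd hc (Ne.symm this)
      · simp
    · simp
  have hcv : ∀ r : Fin (m + n), ¬ (r : ℕ) < n → v.coeff ((r : ℕ) - n) = w r := by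
    intro r hr
    rw [hv, Polynomial.finset_sum_coeff]
    rw [Finset.sum_eq_single r]
    · simp [hr]
    · intro s _ hs
      split_ifs with h
      · simp
      · rw [Polynomial.coeff_C_mul, Polynomial.coeff_X_pow]
        have : (s : ℕ) ≠ (r : ℕ) := fun hc => hs (Fin.ext hc)
        have hs2 := s.2
        have hr2 := r.2
        have : (s : ℕ) - n ≠ (r : ℕ) - n := by omega
        simp only [mul_ite, mul_one, mul_zero, ite_eq_right_iff]
        exact fun hc => absurd hc.symm this
    · simp
  -- not both u, v zero
  have huv : ¬(u = 0 ∧ v = 0) := by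
    rintro ⟨hu0, hv0⟩
    apply hw0
    funext r
    by_cases hr : (r : ℕ) < n
    · have := hcu r hr; rw [hu0] at this; simpa using this.symm
    · have := hcv r hr; rw [hv0] at this; simpa using this.symm
  have hune : u ≠ 0 := by
    intro h0
    rcases eq_or_ne v 0 with hv0 | hv0
    · exact huv ⟨h0, hv0⟩
    · have : v * g = 0 := by rw [h0] at hzero; simpa using hzero
      exact hv0 ((mul_eq_zero.mp this).resolve_right hg0)
  -- f and g are not coprime
  have hnc : ¬ IsCoprime f g := by
    intro hc
    have hdvd : g ∣ u * f := ⟨-v, by linear_combination hzero⟩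
    have : g ∣ u := hc.symm.dvd_of_dvd_mul_right hdvd
    have := Polynomial.natDegree_le_of_dvd this hune
    omega
  -- common root via gcd
  set d := EuclideanDomain.gcd f g with hd
  have hd0 : d ≠ 0 := by
    rw [hd, Ne, EuclideanDomain.gcd_eq_zero_iff]
    tauto
  have hdu : ¬ IsUnit d := fun h => hnc (EuclideanDomain.gcd_isUnit_iff.mp h)
  have hddeg : 0 < d.degree := by
    rcases lt_or_eq_of_le (Polynomial.zero_le_degree_iff.mpr hd0) with h | h
    · exact h
    · exact absurd (Polynomial.isUnit_iff_degree_eq_zero.mpr h.symm) hdu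
  obtain ⟨b, hb⟩ := Complex.exists_root hddeg
  exact ⟨b, Polynomial.eval_eq_zero_of_dvd_of_eval_eq_zero (EuclideanDomain.gcd_dvd_left f g) hb,
    Polynomial.eval_eq_zero_of_dvd_of_eval_eq_zero (EuclideanDomain.gcd_dvd_right f g) hb⟩
theorem syl_apply_eq {R : Type*} [CommRing R] (m n : ℕ) (f g : R[X]) (r k : Fin (m + n)) :
    syl m n f g r k =
      if (r : ℕ) < n then (if (r : ℕ) ≤ (k : ℕ) then f.coeff ((k : ℕ) - (r : ℕ)) else 0)
      else (if (r : ℕ) - n ≤ (k : ℕ) then g.coeff ((k : ℕ) - ((r : ℕ) - n)) else 0) := by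
  rw [syl, sylRow]
  split_ifs with h h1 h2 <;>
    simp_all [mul_comm (X ^ _ : R[X]), Polynomial.coeff_mul_X_pow']

theorem natDegree_det_syl_le (m n : ℕ) (f g : (ℂ[X])[X])
    (Hf : ∀ i, f.coeff i ≠ 0 → (f.coeff i).natDegree + i ≤ m)
    (Hg : ∀ i, g.coeff i ≠ 0 → (g.coeff i).natDegree + i ≤ n) :
    ((syl m n f g).det).natDegree ≤ m * n := by
  classical
  set M := syl m n f g with hM
  rcases eq_or_ne M.det 0 with h0 | h0
  · simp [h0]
  set B : Fin (m + n) → ℕ := fun r => if (r : ℕ) < n then m + (r : ℕ) else (r : ℕ) with hB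
  have entry_bound : ∀ r k : Fin (m + n), (M r k * X ^ (k : ℕ)).natDegree ≤ B r := by
    intro r k
    rw [hM, syl_apply_eq, hB]
    by_cases hr : (r : ℕ) < n <;> simp only [hr, if_true, if_false]
    · split_ifs with hle
      · rcases eq_or_ne (f.coeff ((k : ℕ) - (r : ℕ))) 0 with hc | hc
        · simp [hc]
        · have := Hf _ hc
          refine natDegree_mul_le.trans ?_
          rw [natDegree_X_pow]
          omega
      · simp
    · split_ifs with hle
      · rcases eq_or_ne (g.coeff ((k : ℕ) - ((r : ℕ) - n))) 0 with hc | hc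
        · simp [hc]
        · have := Hg _ hc
          refine natDegree_mul_le.trans ?_
          rw [natDegree_X_pow]
          have := r.2
          omega
      · simp
  -- the column-scaled matrix
  set M' : Matrix (Fin (m + n)) (Fin (m + n)) (ℂ[X]) :=
    Matrix.of (fun r k => (X ^ (k : ℕ) : ℂ[X]) * M r k) with hM'
  have hdet' : M'.det = X ^ (∑ k : Fin (m + n), (k : ℕ)) * M.det := by
    have := Matrix.det_mul_row (fun k : Fin (m + n) => (X : ℂ[X]) ^ (k : ℕ)) M
    rw [hM', this, Finset.prod_pow_eq_pow_sum]
  have hbound : M'.det.natDegree ≤ ∑ r : Fin (m + n), B r := by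
    rw [Matrix.det_apply']
    refine natDegree_sum_le_of_forall_le _ _ fun σ _ => ?_
    refine natDegree_mul_le.trans ?_
    have h1 : (Equiv.Perm.sign σ : ℂ[X]).natDegree = 0 := by
      rcases Int.units_eq_one_or (Equiv.Perm.sign σ) with h | h <;> simp [h]
    rw [h1, zero_add]
    refine (natDegree_prod_le _ _).trans ?_
    rw [← Equiv.sum_comp σ B]
    refine Finset.sum_le_sum fun k _ => ?_
    have := entry_bound (σ k) k
    rw [hM'] at *
    simpa [mul_comm] using this
  -- compute the sums
  have hsumB : ∑ r : Fin (m + n), B r =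
      n * m + m * n + (∑ x ∈ range n, x) + (∑ x ∈ range m, x) := by
    have : ∑ r : Fin (m + n), B r = ∑ x ∈ range (m + n), (if x < n then m + x else x) :=
      Fin.sum_univ_eq_sum_range (fun x => if x < n then m + x else x) (m + n)
    rw [this, add_comm m n, Finset.sum_range_add]
    have h1 : ∑ x ∈ range n, (if x < n then m + x else x) = n * m + ∑ x ∈ range n, x := by
      rw [Finset.sum_congr rfl (fun x hx => if_pos (Finset.mem_range.mp hx)),
        Finset.sum_add_distrib, Finset.sum_const, Finset.card_range, smul_eq_mul]
    have h2 : ∑ x ∈ range m, (if n + x < n then m + (n + x) else n + x) =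
        m * n + ∑ x ∈ range m, x := by
      rw [Finset.sum_congr rfl (fun x _ => if_neg (by omega)), Finset.sum_add_distrib,
        Finset.sum_const, Finset.card_range, smul_eq_mul]
    rw [h1, h2]
    ring
  have hsumT : ∑ k : Fin (m + n), (k : ℕ) =
      n * m + (∑ x ∈ range n, x) + (∑ x ∈ range m, x) := by
    have : ∑ k : Fin (m + n), (k : ℕ) = ∑ x ∈ range (m + n), x :=
      Fin.sum_univ_eq_sum_range (fun x => x) (m + n)
    rw [this, add_comm m n, Finset.sum_range_add, Finset.sum_add_distrib, Finset.sum_const,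
      Finset.card_range, smul_eq_mul]
    ring
  have hX : (X : ℂ[X]) ^ (∑ k : Fin (m + n), (k : ℕ)) ≠ 0 := pow_ne_zero _ X_ne_zero
  have hdeg : M'.det.natDegree = (∑ k : Fin (m + n), (k : ℕ)) + M.det.natDegree := by
    rw [hdet', natDegree_mul hX h0, natDegree_X_pow]
  rw [hdeg, hsumT] at hbound
  rw [hsumB] at hbound
  linarith

end Syl

section Bridge
open Polynomial Finset



/-- The coefficient ring iso `MvPolynomial (Fin 1) ℂ →+* ℂ[X]`. -/
noncomputable def Bco : MvPolynomial (Fin 1) ℂ →+* Polynomial ℂ :=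
  (Polynomial.mapRingHom (MvPolynomial.isEmptyRingEquiv ℂ (Fin 0)).toRingHom).comp
    (MvPolynomial.finSuccEquiv ℂ 0: MvPolynomial (Fin 1) ℂ ≃ₐ[ℂ] _).toRingHom

theorem Bco_injective : Function.Injective Bco := by
  refine (Polynomial.map_injective _ (MvPolynomial.isEmptyRingEquiv ℂ (Fin 0)).injective).comp
    (MvPolynomial.finSuccEquiv ℂ 0).injective

theorem Bco_C (c : ℂ) : Bco (MvPolynomial.C c) = Polynomial.C c := by
  simp [Bco, MvPolynomial.finSuccEquiv_apply]
  exact MvPolynomial.coeff_zero_C c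

theorem natDegree_Bco_le (q : MvPolynomial (Fin 1) ℂ) :
    (Bco q).natDegree ≤ q.totalDegree := by
  refine (Polynomial.natDegree_map_le).trans ?_
  have h : ((MvPolynomial.finSuccEquiv ℂ 0).toRingEquiv.toRingHom q)
      = MvPolynomial.finSuccEquiv ℂ 0 q := rfl
  rw [h, MvPolynomial.natDegree_finSuccEquiv]
  exact MvPolynomial.degreeOf_le_totalDegree q 0

theorem Bco_ne_zero {q : MvPolynomial (Fin 1) ℂ} (h : q ≠ 0) : Bco q ≠ 0 := by
  intro h0
  exact h (Bco_injective (by simpa using h0))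

theorem eval_Bco (b : ℂ) (q : MvPolynomial (Fin 1) ℂ) :
    Polynomial.eval b (Bco q) = MvPolynomial.eval ![b] q := by
  have : (Polynomial.evalRingHom b).comp Bco = MvPolynomial.eval ![b] := by
    apply MvPolynomial.ringHom_ext
    · intro c
      simp [Bco_C]
    · intro i
      have : i = 0 := Subsingleton.elim i 0
      subst this
      simp [Bco, MvPolynomial.finSuccEquiv_apply]
  exact congrFun (congrArg (DFunLike.coe) this) q

/-- Convert a bivariate polynomial into `(ℂ[X])[X]`, with the outer variable `X 0`. -/
noncomputable def toPP (f : MvPolynomial (Fin 2) ℂ) : Polynomial (Polynomial ℂ) :=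
  (MvPolynomial.finSuccEquiv ℂ 1 f).map Bco

theorem toPP_coeff (f : MvPolynomial (Fin 2) ℂ) (i : ℕ) :
    (toPP f).coeff i = Bco ((MvPolynomial.finSuccEquiv ℂ 1 f).coeff i) :=
  Polynomial.coeff_map _ _

theorem eval_toPP (f : MvPolynomial (Fin 2) ℂ) (a b : ℂ) :
    Polynomial.eval a ((toPP f).map (Polynomial.evalRingHom b)) = MvPolynomial.eval ![a, b] f := by
  have h1 : (toPP f).map (Polynomial.evalRingHom b)
      = (MvPolynomial.finSuccEquiv ℂ 1 f).map (MvPolynomial.eval ![b]) := by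
    rw [toPP, Polynomial.map_map]
    congr 1
    apply MvPolynomial.ringHom_ext
    · intro c
      simp [Bco_C]
    · intro i
      have : i = 0 := Subsingleton.elim i 0
      subst this
      simp [Bco, MvPolynomial.finSuccEquiv_apply]
  rw [h1]
  have := MvPolynomial.eval_eq_eval_mv_eval' (![b]) a f
  rw [← this]
  rfl

theorem toPP_coeff_bound (f : MvPolynomial (Fin 2) ℂ) (i : ℕ) (h : (toPP f).coeff i ≠ 0) :
    ((toPP f).coeff i).natDegree + i ≤ f.totalDegree := by
  rw [toPP_coeff] at h ⊢
  have hne : (MvPolynomial.finSuccEquiv ℂ 1 f).coeff i ≠ 0 := by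
    intro h0; rw [h0] at h; simp at h
  have h1 := MvPolynomial.totalDegree_coeff_finSuccEquiv_add_le f i hne
  have h2 := natDegree_Bco_le ((MvPolynomial.finSuccEquiv ℂ 1 f).coeff i)
  omega

theorem natDegree_toPP_le (f : MvPolynomial (Fin 2) ℂ) :
    (toPP f).natDegree ≤ f.totalDegree := by
  refine Polynomial.natDegree_map_le.trans ?_
  rw [MvPolynomial.natDegree_finSuccEquiv]
  exact MvPolynomial.degreeOf_le_totalDegree f 0




local notation "mX" => MvPolynomial.X (R := ℂ) (σ := Fin 2)
local notation "mC" => MvPolynomial.C (R := ℂ) (σ := Fin 2)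

/-- Shear substitution `(x, y) ↦ (x, y + t x)`. -/
noncomputable def shear (t : ℂ) : MvPolynomial (Fin 2) ℂ →ₐ[ℂ] MvPolynomial (Fin 2) ℂ :=
  MvPolynomial.aeval ![mX 0, mX 1 + mC t * mX 0]

theorem eval_shear (t a b : ℂ) (f : MvPolynomial (Fin 2) ℂ) :
    MvPolynomial.eval ![a, b] (shear t f) = MvPolynomial.eval ![a, b + t * a] f := by
  induction f using MvPolynomial.induction_on with
  | C c => simp [shear]
  | add p q hp hq => simp [hp, hq]
  | mul_X p i hp =>
    rw [map_mul, map_mul, map_mul, hp]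
    congr 1
    fin_cases i <;> simp [shear]

theorem shear_monomial (t : ℂ) (d : Fin 2 →₀ ℕ) (c : ℂ) :
    shear t (MvPolynomial.monomial d c) = mC c * mX 0 ^ d 0 * (mX 1 + mC t * mX 0) ^ d 1 := by
  rw [shear, MvPolynomial.aeval_monomial,
    Finsupp.prod_fintype _ _ (fun i => pow_zero _), Fin.prod_univ_two]
  simp only [Matrix.cons_val_zero, Matrix.cons_val_one, Matrix.head_cons,
    MvPolynomial.algebraMap_eq]
  ring

theorem dsum_eq (d : Fin 2 →₀ ℕ) : (d.sum fun _ e => e) = d 0 + d 1 := by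
  rw [Finsupp.sum_fintype _ _ (fun i => rfl), Fin.sum_univ_two]

theorem totalDegree_shear_le (t : ℂ) (f : MvPolynomial (Fin 2) ℂ) :
    (shear t f).totalDegree ≤ f.totalDegree := by
  conv_lhs => rw [MvPolynomial.as_sum f]
  rw [map_sum]
  refine (MvPolynomial.totalDegree_finset_sum _ _).trans ?_
  refine Finset.sup_le fun d hd => ?_
  rw [shear_monomial]
  have h1 : ((mX 1 + mC t * mX 0)).totalDegree ≤ 1 := by
    refine (MvPolynomial.totalDegree_add _ _).trans ?_
    simp only [max_le_iff, MvPolynomial.totalDegree_X, le_refl, true_and]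
    refine (MvPolynomial.totalDegree_mul _ _).trans ?_
    simp [MvPolynomial.totalDegree_X]
  have h2 : ((mX 1 + mC t * mX 0) ^ d 1).totalDegree ≤ d 1 := by
    refine (MvPolynomial.totalDegree_pow _ _).trans ?_
    calc d 1 * ((mX 1 + mC t * mX 0)).totalDegree ≤ d 1 * 1 := by gcongr
    _ = d 1 := mul_one _
  have h3 : ((mC (MvPolynomial.coeff d f) * mX 0 ^ d 0)).totalDegree ≤ d 0 := by
    refine (MvPolynomial.totalDegree_mul _ _).trans ?_
    simp only [MvPolynomial.totalDegree_C, zero_add]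
    refine (MvPolynomial.totalDegree_pow _ _).trans ?_
    simp [MvPolynomial.totalDegree_X]
  refine (MvPolynomial.totalDegree_mul _ _).trans ?_
  have h4 := MvPolynomial.le_totalDegree hd
  rw [dsum_eq] at h4
  omega

theorem coeff_X0_pow_mul_X1_pow (D p q : ℕ) :
    MvPolynomial.coeff (Finsupp.single 0 D) ((mX 0) ^ p * (mX 1) ^ q)
      = if p = D ∧ q = 0 then 1 else 0 := by
  rw [MvPolynomial.X_pow_eq_monomial, MvPolynomial.X_pow_eq_monomial, MvPolynomial.monomial_mul,
    MvPolynomial.coeff_monomial, mul_one]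
  by_cases h : p = D ∧ q = 0
  · obtain ⟨rfl, rfl⟩ := h
    simp
  · rw [if_neg h, if_neg]
    intro he
    apply h
    constructor
    · have := DFunLike.congr_fun he 0
      simpa using this
    · have := DFunLike.congr_fun he 1
      simpa using this

theorem coeff_shear_monomial (t : ℂ) (D : ℕ) (d : Fin 2 →₀ ℕ) (c : ℂ) (hd : d 0 + d 1 ≤ D) :
    MvPolynomial.coeff (Finsupp.single 0 D) (shear t (MvPolynomial.monomial d c))
      = if d 0 + d 1 = D then c * t ^ d 1 else 0 := by
  rw [shear_monomial, add_pow, Finset.mul_sum, MvPolynomial.coeff_sum]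
  have hval : ∀ k, MvPolynomial.coeff (Finsupp.single 0 D)
      (mC c * mX 0 ^ d 0 * ((mX 1) ^ k * (mC t * mX 0) ^ (d 1 - k)
        * ((d 1).choose k : MvPolynomial (Fin 2) ℂ)))
      = if d 0 + (d 1 - k) = D ∧ k = 0 then c * t ^ (d 1 - k) * ((d 1).choose k : ℂ) else 0 := by
    intro k
    have hre : mC c * mX 0 ^ d 0 * ((mX 1) ^ k * (mC t * mX 0) ^ (d 1 - k)
          * ((d 1).choose k : MvPolynomial (Fin 2) ℂ))
        = mC (c * t ^ (d 1 - k) * ((d 1).choose k : ℂ))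
          * ((mX 0) ^ (d 0 + (d 1 - k)) * (mX 1) ^ k) := by
      have hcast : ((d 1).choose k : MvPolynomial (Fin 2) ℂ) = mC (((d 1).choose k : ℂ)) := by
        rw [map_natCast (MvPolynomial.C : ℂ →+* MvPolynomial (Fin 2) ℂ)]
      rw [hcast, map_mul, map_mul, map_pow, mul_pow, pow_add]
      ring
    rw [hre, MvPolynomial.coeff_C_mul, coeff_X0_pow_mul_X1_pow, mul_ite, mul_one, mul_zero]
  rw [Finset.sum_congr rfl (fun k _ => hval k)]
  rw [Finset.sum_eq_single_of_mem 0 (Finset.mem_range.mpr (Nat.succ_pos _))]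
  · simp only [Nat.sub_zero, Nat.choose_zero_right, Nat.cast_one, mul_one, and_true]
  · intro k _ hk
    rw [if_neg]
    rintro ⟨-, rfl⟩
    exact hk rfl

/-- The polynomial (in the shear parameter) giving the top `X 0` coefficient. -/
noncomputable def topPoly (f : MvPolynomial (Fin 2) ℂ) (D : ℕ) : Polynomial ℂ :=
  ∑ d ∈ f.support,
    if d 0 + d 1 = D then Polynomial.C (MvPolynomial.coeff d f) * Polynomial.X ^ (d 1) else 0

theorem coeff_shear (t : ℂ) (f : MvPolynomial (Fin 2) ℂ) (D : ℕ) (hD : f.totalDegree ≤ D) :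
    MvPolynomial.coeff (Finsupp.single 0 D) (shear t f)
      = Polynomial.eval t (topPoly f D) := by
  conv_lhs => rw [MvPolynomial.as_sum f]
  rw [map_sum, MvPolynomial.coeff_sum, topPoly, Polynomial.eval_finset_sum]
  refine Finset.sum_congr rfl fun d hd => ?_
  have hle : d 0 + d 1 ≤ D := by
    have := MvPolynomial.le_totalDegree hd
    rw [dsum_eq] at this
    omega
  rw [coeff_shear_monomial t D d _ hle, apply_ite (Polynomial.eval t)]
  simp

theorem topPoly_ne_zero (f : MvPolynomial (Fin 2) ℂ) (hf : f ≠ 0) :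
    topPoly f f.totalDegree ≠ 0 := by
  obtain ⟨d0, hd0, hsup⟩ := Finset.exists_mem_eq_sup f.support
    (MvPolynomial.support_nonempty.mpr hf) (fun d => d.sum fun _ e => e)
  have hD : d0 0 + d0 1 = f.totalDegree := by
    rw [MvPolynomial.totalDegree, hsup, dsum_eq]
  intro h0
  have hc : (topPoly f f.totalDegree).coeff (d0 1) = MvPolynomial.coeff d0 f := by
    rw [topPoly, Polynomial.finset_sum_coeff]
    rw [Finset.sum_eq_single_of_mem d0 hd0]
    · rw [if_pos hD, Polynomial.coeff_C_mul, Polynomial.coeff_X_pow, if_pos rfl, mul_one]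
    · intro d hd hne
      split_ifs with h1
      · rw [Polynomial.coeff_C_mul, Polynomial.coeff_X_pow]
        rw [if_neg, mul_zero]
        intro he
        apply hne
        ext i
        fin_cases i
        · show d 0 = d0 0; omega
        · show d 1 = d0 1; omega
      · simp
  rw [h0] at hc
  simp only [Polynomial.coeff_zero] at hc
  exact (MvPolynomial.mem_support_iff.mp hd0) hc.symm


theorem eq_C_of_totalDegree_eq_zero {σ : Type*} {q : MvPolynomial σ ℂ} (h : q.totalDegree = 0) :
    q = MvPolynomial.C (MvPolynomial.coeff 0 q) := by
  classical
  ext d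
  rcases eq_or_ne d 0 with rfl | hd
  · simp [MvPolynomial.coeff_C]
  · rw [MvPolynomial.coeff_C, if_neg (Ne.symm hd)]
    by_contra hc
    have hmem : d ∈ q.support := MvPolynomial.mem_support_iff.mpr hc
    have h2 := (MvPolynomial.totalDegree_eq_zero_iff σ q).mp h d hmem
    exact hd (Finsupp.ext fun x => h2 x)

theorem cons_eq_single (D : ℕ) :
    Finsupp.cons D (0 : Fin 1 →₀ ℕ) = Finsupp.single (0 : Fin 2) D := by
  ext i
  refine Fin.cases ?_ ?_ i
  · simp
  · intro j
    simp [Finsupp.single_apply, (Fin.succ_ne_zero j).symm]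

end Bridge

end BezoutAux

section ToPPFacts
open Polynomial
namespace BezoutAux

theorem toPP_facts {h : MvPolynomial (Fin 2) ℂ} {Dh : ℕ} (htd : h.totalDegree ≤ Dh)
    (hc : MvPolynomial.coeff (Finsupp.single 0 Dh) h ≠ 0) :
    (toPP h).natDegree = Dh ∧
      ∀ b : ℂ, ((toPP h).map (Polynomial.evalRingHom b)).natDegree = Dh := by
  have hq : MvPolynomial.coeff 0 ((MvPolynomial.finSuccEquiv ℂ 1 h).coeff Dh) ≠ 0 := by
    rw [MvPolynomial.finSuccEquiv_coeff_coeff, cons_eq_single]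
    exact hc
  have hqne : (MvPolynomial.finSuccEquiv ℂ 1 h).coeff Dh ≠ 0 := fun h0 => by simp [h0] at hq
  have htq : ((MvPolynomial.finSuccEquiv ℂ 1 h).coeff Dh).totalDegree = 0 := by
    have := MvPolynomial.totalDegree_coeff_finSuccEquiv_add_le h Dh hqne
    omega
  have hqC := eq_C_of_totalDegree_eq_zero htq
  have hcoeffD : (toPP h).coeff Dh
      = Polynomial.C (MvPolynomial.coeff 0 ((MvPolynomial.finSuccEquiv ℂ 1 h).coeff Dh)) := by
    rw [toPP_coeff, hqC, Bco_C, ← hqC]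
  have hndle : (toPP h).natDegree ≤ Dh := (natDegree_toPP_le h).trans htd
  have hcoeffD0 : (toPP h).coeff Dh ≠ 0 := by
    rw [hcoeffD]
    simpa using hq
  refine ⟨le_antisymm hndle (Polynomial.le_natDegree_of_ne_zero hcoeffD0), fun b => ?_⟩
  have h1 : ((toPP h).map (Polynomial.evalRingHom b)).coeff Dh ≠ 0 := by
    rw [Polynomial.coeff_map, hcoeffD]
    simpa using hq
  exact le_antisymm (Polynomial.natDegree_map_le.trans hndle)
    (Polynomial.le_natDegree_of_ne_zero h1)

end BezoutAux
end ToPPFacts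

open MvPolynomial

/-- Bézout bound: finitely many common zeros of two nonzero bivariate polynomials
number at most the product of the total degrees. -/
theorem bezout_bound (f g : MvPolynomial (Fin 2) ℂ) (hf : f ≠ 0) (hg : g ≠ 0)
    (hfin : {p : ℂ × ℂ | eval ![p.1, p.2] f = 0 ∧ eval ![p.1, p.2] g = 0}.Finite) :
    {p : ℂ × ℂ | eval ![p.1, p.2] f = 0 ∧ eval ![p.1, p.2] g = 0}.ncard ≤
      f.totalDegree * g.totalDegree := by
  classical
  set S : Set (ℂ × ℂ) := {p : ℂ × ℂ | eval ![p.1, p.2] f = 0 ∧ eval ![p.1, p.2] g = 0}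
    with hSdef
  rcases Nat.eq_zero_or_pos f.totalDegree with hD0 | hD1
  · have hfc := BezoutAux.eq_C_of_totalDegree_eq_zero hD0
    have hSempty : S = ∅ := by
      ext p
      simp only [hSdef, Set.mem_setOf_eq, Set.mem_empty_iff_false, iff_false, not_and]
      intro h1
      exfalso
      rw [hfc, eval_C] at h1
      exact hf (by rw [hfc, h1, map_zero])
    rw [hSempty]
    simp
  rcases Nat.eq_zero_or_pos g.totalDegree with hE0 | hE1
  · have hgc := BezoutAux.eq_C_of_totalDegree_eq_zero hE0
    have hSempty : S = ∅ := by
      ext p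
      simp only [hSdef, Set.mem_setOf_eq, Set.mem_empty_iff_false, iff_false, not_and]
      intro _ h1
      rw [hgc, eval_C] at h1
      exact hg (by rw [hgc, h1, map_zero])
    rw [hSempty]
    simp
  set D := f.totalDegree with hD
  set E := g.totalDegree with hE
  -- choose the shear parameter t
  have hbadf : {x : ℂ | (BezoutAux.topPoly f D).IsRoot x}.Finite :=
    Polynomial.finite_setOf_isRoot (BezoutAux.topPoly_ne_zero f hf)
  have hbadg : {x : ℂ | (BezoutAux.topPoly g E).IsRoot x}.Finite :=
    Polynomial.finite_setOf_isRoot (BezoutAux.topPoly_ne_zero g hg)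
  have hbad3 : ((fun q : (ℂ × ℂ) × (ℂ × ℂ) => (q.1.2 - q.2.2) / (q.1.1 - q.2.1)) ''
      (S ×ˢ S)).Finite := (hfin.prod hfin).image _
  obtain ⟨t, ht⟩ := (((hbadf.union hbadg).union hbad3).infinite_compl).nonempty
  simp only [Set.mem_compl_iff, Set.mem_union, not_or] at ht
  obtain ⟨⟨htf, htg⟩, hts⟩ := ht
  -- sheared polynomials
  set f' := BezoutAux.shear t f with hf'def
  set g' := BezoutAux.shear t g with hg'def
  have htdf : f'.totalDegree ≤ D := BezoutAux.totalDegree_shear_le t f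
  have htdg : g'.totalDegree ≤ E := BezoutAux.totalDegree_shear_le t g
  have hcf0 : MvPolynomial.coeff (Finsupp.single 0 D) f' ≠ 0 := by
    rw [hf'def, BezoutAux.coeff_shear t f D le_rfl]
    exact htf
  have hcg0 : MvPolynomial.coeff (Finsupp.single 0 E) g' ≠ 0 := by
    rw [hg'def, BezoutAux.coeff_shear t g E le_rfl]
    exact htg
  set F := BezoutAux.toPP f' with hF
  set G := BezoutAux.toPP g' with hG
  obtain ⟨hFnd, hFbnd⟩ := BezoutAux.toPP_facts htdf hcf0
  obtain ⟨hGnd, hGbnd⟩ := BezoutAux.toPP_facts htdg hcg0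
  -- the resultant
  set Rf : Polynomial ℂ := (BezoutAux.syl D E F G).det with hRf
  have hRdeg : Rf.natDegree ≤ D * E := by
    refine BezoutAux.natDegree_det_syl_le D E F G (fun i hi => ?_) (fun i hi => ?_)
    · exact (BezoutAux.toPP_coeff_bound f' i hi).trans htdf
    · exact (BezoutAux.toPP_coeff_bound g' i hi).trans htdg
  have hspec : ∀ b : ℂ, Polynomial.eval b Rf
      = (BezoutAux.syl D E (F.map (Polynomial.evalRingHom b))
          (G.map (Polynomial.evalRingHom b))).det :=
    fun b => BezoutAux.det_syl_map (Polynomial.evalRingHom b) D E F G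
  -- the transformed zero set
  set S' : Set (ℂ × ℂ) := {p : ℂ × ℂ | eval ![p.1, p.2] f' = 0 ∧ eval ![p.1, p.2] g' = 0}
    with hS'def
  have hmemS' : ∀ p : ℂ × ℂ, p ∈ S' ↔ (p.1, p.2 + t * p.1) ∈ S := by
    intro p
    simp only [hS'def, hSdef, Set.mem_setOf_eq, hf'def, hg'def, BezoutAux.eval_shear]
  have hS'img : S' = (fun p : ℂ × ℂ => (p.1, p.2 - t * p.1)) '' S := by
    ext p
    rw [hmemS']
    constructor
    · intro hmem
      refine ⟨(p.1, p.2 + t * p.1), hmem, ?_⟩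
      have h2 : p.2 + t * p.1 - t * p.1 = p.2 := by ring
      simp only [h2]
    · rintro ⟨q, hq, rfl⟩
      have h2 : q.2 - t * q.1 + t * q.1 = q.2 := by ring
      simpa only [h2] using hq
  have hψinj : Function.Injective (fun p : ℂ × ℂ => (p.1, p.2 - t * p.1)) := by
    intro p q hpq
    rw [Prod.ext_iff] at hpq
    obtain ⟨h1, h2⟩ := hpq
    simp only at h1 h2
    refine Prod.ext h1 ?_
    rw [h1] at h2
    linear_combination h2
  have hfin' : S'.Finite := hS'img ▸ hfin.image _
  have hcard : S'.ncard = S.ncard := by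
    rw [hS'img]
    exact Set.ncard_image_of_injective S hψinj
  have hRroot : ∀ p ∈ S', Polynomial.eval p.2 Rf = 0 := by
    intro p hp
    rw [hspec]
    refine BezoutAux.det_syl_eq_zero_of_common_root D E _ _ (le_of_eq (hFbnd p.2))
      (le_of_eq (hGbnd p.2)) (by omega) p.1 ?_ ?_
    · rw [hF, BezoutAux.eval_toPP]
      exact hp.1
    · rw [hG, BezoutAux.eval_toPP]
      exact hp.2
  have hRne : Rf ≠ 0 := by
    intro h0
    have hall : ∀ b : ℂ, ∃ a : ℂ, (a, b) ∈ S' := by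
      intro b
      have hdet0 : (BezoutAux.syl D E (F.map (Polynomial.evalRingHom b))
          (G.map (Polynomial.evalRingHom b))).det = 0 := by
        rw [← hspec, h0, Polynomial.eval_zero]
      obtain ⟨a, ha1, ha2⟩ := BezoutAux.exists_common_root_of_det_syl_eq_zero D E _ _
        (hFbnd b) (hGbnd b) hD1 hE1 hdet0
      refine ⟨a, ?_, ?_⟩
      · show eval ![a, b] f' = 0
        rw [← BezoutAux.eval_toPP]
        exact ha1
      · show eval ![a, b] g' = 0
        rw [← BezoutAux.eval_toPP]
        exact ha2
    have himg : Prod.snd '' S' = Set.univ :=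
      Set.eq_univ_of_forall fun b => (hall b).elim fun a ha => ⟨(a, b), ha, rfl⟩
    exact Set.infinite_univ (himg ▸ hfin'.image Prod.snd)
  have hsnd : Set.InjOn Prod.snd S' := by
    rw [hS'img]
    rintro _ ⟨p, hp, rfl⟩ _ ⟨q, hq, rfl⟩ h2
    simp only at h2
    have hpq : p = q := by
      by_cases h1 : p.1 = q.1
      · refine Prod.ext h1 ?_
        rw [h1] at h2
        linear_combination h2
      · exfalso
        apply hts
        have hsub : p.1 - q.1 ≠ 0 := sub_ne_zero.mpr h1
        refine ⟨(p, q), Set.mem_prod.mpr ⟨hp, hq⟩, ?_⟩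
        field_simp
        linear_combination h2
    rw [hpq]
  calc S.ncard = S'.ncard := hcard.symm
    _ = (Prod.snd '' S').ncard := (Set.ncard_image_of_injOn hsnd).symm
    _ ≤ (↑Rf.roots.toFinset : Set ℂ).ncard := by
        refine Set.ncard_le_ncard ?_ (Rf.roots.toFinset.finite_toSet)
        rintro b ⟨p, hp, rfl⟩
        simp only [Finset.coe_sort_coe, Multiset.mem_toFinset, Finset.mem_coe]
        rw [Polynomial.mem_roots hRne]
        exact hRroot p hp
    _ ≤ Rf.natDegree := by
        rw [Set.ncard_coe_finset]
        exact (Multiset.toFinset_card_le _).trans (Polynomial.card_roots' Rf)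
    _ ≤ D * E := hRdeg
end

section
/- Let B⁽¹⁾, C⁽¹⁾ ∈ ℂ³ᵖ¹ˣ³ᵖ¹ and B⁽²⁾, C⁽²⁾ ∈ ℂ³ᵖ²ˣ³ᵖ² be block 3×3 matrices whose (2,1), (3,1), (2,2), (3,2) blocks are all zero (i.e., all nonzero blocks lie in the first block row or the third block column). Then the matrix Δ₀ = B⁽¹⁾ ⊗ C⁽²⁾ − C⁽¹⁾ ⊗ B⁽²⁾ is singular: det Δ₀ = 0. -/
open Matrix Kronecker

theorem delta0_singular {p1 p2 : ℕ} (hp1 : 0 < p1) (hp2 : 0 < p2)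
    (B1 C1 : Matrix (Fin 3 × Fin p1) (Fin 3 × Fin p1) ℂ)
    (B2 C2 : Matrix (Fin 3 × Fin p2) (Fin 3 × Fin p2) ℂ)
    (hB1 : ∀ p q, p.1 ≠ 0 → q.1 ≠ 2 → B1 p q = 0)
    (hC1 : ∀ p q, p.1 ≠ 0 → q.1 ≠ 2 → C1 p q = 0)
    (hB2 : ∀ p q, p.1 ≠ 0 → q.1 ≠ 2 → B2 p q = 0)
    (hC2 : ∀ p q, p.1 ≠ 0 → q.1 ≠ 2 → C2 p q = 0) :
    (B1 ⊗ₖ C2 - C1 ⊗ₖ B2).det = 0 := by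
  classical
  set M := B1 ⊗ₖ C2 - C1 ⊗ₖ B2 with hM
  have hzero : ∀ (r c : (Fin 3 × Fin p1) × (Fin 3 × Fin p2)),
      r.1.1 ≠ 0 → r.2.1 ≠ 0 → (c.1.1 ≠ 2 ∨ c.2.1 ≠ 2) → M r c = 0 := by
    intro r c hr1 hr2 hc
    simp only [hM, Matrix.sub_apply, Matrix.kroneckerMap_apply]
    rcases hc with hc | hc
    · rw [hB1 _ _ hr1 hc, hC1 _ _ hr1 hc]; ring
    · rw [hB2 _ _ hr2 hc, hC2 _ _ hr2 hc]; ring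
  let emb : (Fin 2 × Fin p1) × (Fin 2 × Fin p2) → (Fin 3 × Fin p1) × (Fin 3 × Fin p2) :=
    fun r => ((r.1.1.succ, r.1.2), (r.2.1.succ, r.2.2))
  have hemb : Function.Injective emb := by
    intro a b h
    simp only [emb, Prod.ext_iff, Fin.succ_inj] at h
    exact Prod.ext (Prod.ext h.1.1 h.1.2) (Prod.ext h.2.1 h.2.2)
  let embS : Fin p1 × Fin p2 → (Fin 3 × Fin p1) × (Fin 3 × Fin p2) :=
    fun s => ((2, s.1), (2, s.2))
  let N : Matrix ((Fin 2 × Fin p1) × (Fin 2 × Fin p2)) (Fin p1 × Fin p2) ℂ :=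
    fun r s => M (emb r) (embS s)
  have hker : LinearMap.ker N.vecMulLinear ≠ ⊥ := by
    apply LinearMap.ker_ne_bot_of_finrank_lt
    simp only [Module.finrank_pi, Fintype.card_prod, Fintype.card_fin]
    nlinarith
  obtain ⟨w, hw, hw0⟩ := (Submodule.ne_bot_iff _).mp hker
  rw [LinearMap.mem_ker, Matrix.vecMulLinear_apply] at hw
  rw [← Matrix.exists_vecMul_eq_zero_iff]
  set v : (Fin 3 × Fin p1) × (Fin 3 × Fin p2) → ℂ := fun r =>
    if h : r.1.1 ≠ 0 ∧ r.2.1 ≠ 0 then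
      w ((r.1.1.pred h.1, r.1.2), (r.2.1.pred h.2, r.2.2)) else 0 with hv
  have hve : ∀ r', v (emb r') = w r' := by
    intro r'
    simp [hv, emb, Fin.succ_ne_zero, Fin.pred_succ]
  refine ⟨v, ?_, ?_⟩
  · intro hv0
    apply hw0
    funext r'
    have := congrFun hv0 (emb r')
    rw [hve r'] at this
    simpa using this
  · funext c
    simp only [Matrix.vecMul, dotProduct]
    by_cases hc : c.1.1 = 2 ∧ c.2.1 = 2
    · have hsum : ∑ r, v r * M r c = ∑ r', w r' * N r' (c.1.2, c.2.2) := by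
        have h1 : ∑ r' : (Fin 2 × Fin p1) × Fin 2 × Fin p2, w r' * N r' (c.1.2, c.2.2)
            = ∑ r ∈ Finset.univ.image emb, v r * M r c := by
          rw [Finset.sum_image (fun a _ b _ h => hemb h)]
          refine (Finset.sum_congr rfl fun r _ => ?_).symm
          rw [hve]
          congr 1
          simp only [N]
          congr 1
          simp only [embS]
          ext
          · exact congrArg Fin.val hc.1
          · rfl
          · exact congrArg Fin.val hc.2
          · rfl
        rw [h1]
        refine (Finset.sum_subset (Finset.subset_univ _) ?_).symm
        intro r _ hr
        rcases Classical.em (r.1.1 ≠ 0 ∧ r.2.1 ≠ 0) with h | h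
        · exfalso
          apply hr
          refine Finset.mem_image.mpr ⟨((r.1.1.pred h.1, r.1.2), (r.2.1.pred h.2, r.2.2)),
            Finset.mem_univ _, ?_⟩
          simp [emb, Fin.succ_pred]
        · rw [hv]; simp only [dif_neg h, zero_mul]
      rw [hsum]
      exact congrFun hw (c.1.2, c.2.2)
    · apply Finset.sum_eq_zero
      intro r _
      rcases Classical.em (r.1.1 ≠ 0 ∧ r.2.1 ≠ 0) with h | h
      · rw [hzero r c h.1 h.2 (by tauto), mul_zero]
      · rw [hv]; simp only [dif_neg h, zero_mul]
end
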